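/- Let ν_l be the Student's t-density with parameter μ > 0, CDF F and inverse F^{-1}: (0,1) → ℝ. For each n ≥ 1 there exists a constant C = C(μ,n) such that, as u → 0⁺, |dⁿ/duⁿ F^{-1}(u)| ≤ C u^{-(μn+1)/μ}, and as u → 1⁻, |dⁿ/duⁿ F^{-1}(u)| ≤ C (1-u)^{-(μn+1)/μ}. -/

import Mathlib

open MeasureTheory Real Set Filter

lemma stmt7_poly_bound (P : Polynomial ℝ) (d : ℕ) (hd : P.natDegree ≤ d) :
    ∃ C : ℝ, 0 < C ∧ ∀ x : ℝ, |P.eval x| ≤ C * (1 + x^2) ^ ((d:ℝ)/2) := by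
  classical
  refine ⟨(∑ i ∈ Finset.range (P.natDegree + 1), |P.coeff i|) + 1, by positivity, fun x => ?_⟩
  have hb : (1:ℝ) ≤ 1 + x^2 := by nlinarith [sq_nonneg x]
  have hpow : ∀ i : ℕ, i ≤ d → |x| ^ i ≤ (1 + x^2) ^ ((d:ℝ)/2) := by
    intro i hi
    have h1 : |x| ≤ (1 + x^2) ^ ((1:ℝ)/2) := by
      rw [← Real.sqrt_eq_rpow, ← Real.sqrt_sq_eq_abs]
      exact Real.sqrt_le_sqrt (by nlinarith)
    calc |x| ^ i ≤ ((1 + x^2) ^ ((1:ℝ)/2)) ^ i :=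
          pow_le_pow_left₀ (abs_nonneg x) h1 i
      _ = (1 + x^2) ^ ((i:ℝ)/2) := by
          rw [← Real.rpow_natCast ((1 + x^2) ^ ((1:ℝ)/2)) i, ← Real.rpow_mul (by linarith)]
          ring_nf
      _ ≤ (1 + x^2) ^ ((d:ℝ)/2) := by
          apply Real.rpow_le_rpow_of_exponent_le hb
          have := (Nat.cast_le (α := ℝ)).2 hi
          linarith
  have h0 : (0:ℝ) < (1 + x^2) ^ ((d:ℝ)/2) := Real.rpow_pos_of_pos (by linarith) _
  calc |P.eval x| = |∑ i ∈ Finset.range (P.natDegree + 1), P.coeff i * x ^ i| := by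
        rw [Polynomial.eval_eq_sum_range]
    _ ≤ ∑ i ∈ Finset.range (P.natDegree + 1), |P.coeff i * x ^ i| := Finset.abs_sum_le_sum_abs _ _
    _ ≤ ∑ i ∈ Finset.range (P.natDegree + 1), |P.coeff i| * (1 + x^2) ^ ((d:ℝ)/2) := by
        apply Finset.sum_le_sum
        intro i hi
        rw [abs_mul, abs_pow]
        have hi' : i ≤ d := by have := Finset.mem_range.1 hi; omega
        exact mul_le_mul_of_nonneg_left (hpow i hi') (abs_nonneg _)
    _ = (∑ i ∈ Finset.range (P.natDegree + 1), |P.coeff i|) * (1 + x^2) ^ ((d:ℝ)/2) := by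
        rw [← Finset.sum_mul]
    _ ≤ _ := mul_le_mul_of_nonneg_right (by linarith) h0.le

lemma stmt7_nu_cont (c β : ℝ) : Continuous (fun x : ℝ => c * (1+x^2) ^ (-β)) := by
  apply Continuous.mul continuous_const
  apply Continuous.rpow_const (by continuity)
  intro x
  exact Or.inl (by positivity)

lemma stmt7_refl_int {f : ℝ → ℝ} {c : ℝ} (h : IntegrableOn f (Ici (-c))) :
    IntegrableOn (fun t => f (-t)) (Iic c) := by
  have A : MeasurableEmbedding (fun x : ℝ => -x) :=
    (Homeomorph.neg ℝ).isClosedEmbedding.measurableEmbedding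
  have hmap : volume.restrict (Iic c) =
      Measure.map (fun x : ℝ => -x) (volume.restrict (Ici (-c))) := by
    rw [show volume.restrict (Iic c) =
        (Measure.map (fun x : ℝ => -x) volume).restrict (Iic c) by
      rw [Measure.map_neg_eq_self (volume : Measure ℝ)], A.restrict_map]
    congr 1
    ext x
    simp
  rw [IntegrableOn, hmap, A.integrable_map_iff]
  have : ((fun t => f (-t)) ∘ fun x : ℝ => -x) = f := by
    ext x; simp
  rw [this]
  exact h

lemma stmt7_nu_int (c β : ℝ) (hc : 0 < c) (hβ : 1/2 < β) :
    Integrable (fun x : ℝ => c * (1+x^2) ^ (-β)) := by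
  set f : ℝ → ℝ := fun x => c * (1+x^2) ^ (-β) with hf
  have hfc : Continuous f := stmt7_nu_cont c β
  have hIoi : IntegrableOn f (Ioi 1) := by
    have hg : IntegrableOn (fun x : ℝ => c * x ^ (-2*β)) (Ioi 1) :=
      (integrableOn_Ioi_rpow_of_lt (by linarith) one_pos).const_mul c
    apply hg.mono' (hfc.aestronglyMeasurable.restrict)
    filter_upwards [ae_restrict_mem measurableSet_Ioi] with x hx
    have hx1 : (1:ℝ) < x := hx
    have h1 : (1+x^2) ^ (-β) ≤ x ^ (-2*β) := by
      have : x ^ (-2*β) = (x^2) ^ (-β) := by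
        rw [← Real.rpow_natCast x 2, ← Real.rpow_mul (by linarith)]
        ring_nf
      rw [this]
      apply Real.rpow_le_rpow_of_nonpos (by nlinarith) (by nlinarith) (by linarith)
    have : 0 ≤ f x := by positivity
    rw [Real.norm_eq_abs, abs_of_nonneg this]
    exact mul_le_mul_of_nonneg_left h1 hc.le
  have hIic : IntegrableOn f (Iic (-1)) := by
    have h1 : IntegrableOn f (Ici (-(-1:ℝ))) := by
      rw [show -(-1:ℝ) = 1 by norm_num, integrableOn_Ici_iff_integrableOn_Ioi]
      exact hIoi
    have := stmt7_refl_int h1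
    apply this.congr_fun _ measurableSet_Iic
    intro x _
    simp [hf]
  have hIcc : IntegrableOn f (Icc (-1) 1) := hfc.continuousOn.integrableOn_compact isCompact_Icc
  have : IntegrableOn f (Iic (-1) ∪ (Icc (-1) 1 ∪ Ioi 1)) :=
    (integrableOn_union).2 ⟨hIic, (integrableOn_union).2 ⟨hIcc, hIoi⟩⟩
  rw [← integrableOn_univ]
  apply this.mono_set
  intro x _
  simp only [mem_union, mem_Iic, mem_Icc, mem_Ioi]
  by_cases h1 : x ≤ -1
  · exact Or.inl h1
  · by_cases h2 : x ≤ 1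
    · exact Or.inr (Or.inl ⟨by linarith, h2⟩)
    · exact Or.inr (Or.inr (by linarith))

lemma stmt7_F_props (ν F : ℝ → ℝ) (hνc : Continuous ν) (hνi : Integrable ν)
    (hνp : ∀ x, 0 < ν x) (hF : ∀ x, F x = ∫ t in Set.Iic x, ν t) :
    (∀ a b : ℝ, F b - F a = ∫ x in a..b, ν x) ∧
    (∀ b, HasDerivAt F (ν b) b) ∧ StrictMono F := by
  have hInt : ∀ a b : ℝ, IntervalIntegrable ν volume a b := fun a b => hνi.intervalIntegrable
  have hF_eq : ∀ a b : ℝ, F b - F a = ∫ x in a..b, ν x := by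
    intro a b
    rw [hF, hF]
    exact intervalIntegral.integral_Iic_sub_Iic hνi.integrableOn hνi.integrableOn
  have hFd : ∀ b, HasDerivAt F (ν b) b := by
    intro b
    have h1 : HasDerivAt (fun u => ∫ x in (0:ℝ)..u, ν x) (ν b) b :=
      intervalIntegral.integral_hasDerivAt_right (hInt 0 b)
        (hνc.stronglyMeasurable.stronglyMeasurableAtFilter)
        hνc.continuousAt
    have : F = fun u => (∫ x in (0:ℝ)..u, ν x) + F 0 := by
      funext y
      have := hF_eq 0 y
      linarith
    rw [this]
    exact h1.add_const _
  refine ⟨hF_eq, hFd, fun x y hxy => ?_⟩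
  have h2 : 0 < ∫ t in x..y, ν t :=
    intervalIntegral.intervalIntegral_pos_of_pos (hInt x y) hνp hxy
  have := hF_eq x y
  linarith

set_option maxHeartbeats 2000000 in
theorem stmt_7 (μ cμ : ℝ) (hμ : 0 < μ)
    (hc : cμ = Real.Gamma ((μ+1)/2) / (Real.Gamma (μ/2) * Real.sqrt Real.pi))
    (ν : ℝ → ℝ) (hν : ∀ x, ν x = cμ * (1 + x^2) ^ (-(μ+1)/2))
    (F : ℝ → ℝ) (hF : ∀ x, F x = ∫ t in Set.Iic x, ν t)
    (Finv : ℝ → ℝ)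
    (hFinv : ∀ u ∈ Set.Ioo (0:ℝ) 1, F (Finv u) = u)
    (hFinv' : ∀ x, Finv (F x) = x)
    (n : ℕ) (hn : 1 ≤ n) :
    ∃ C : ℝ, 0 < C ∧
      (∀ᶠ u in nhdsWithin 0 (Set.Ioi (0:ℝ)),
        |iteratedDeriv n Finv u| ≤ C * u ^ (-(μ * n + 1)/μ)) ∧
      (∀ᶠ u in nhdsWithin 1 (Set.Iio (1:ℝ)),
        |iteratedDeriv n Finv u| ≤ C * (1 - u) ^ (-(μ * n + 1)/μ)) := by
  have hc0 : 0 < cμ := by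
    rw [hc]
    have h1 := Real.Gamma_pos_of_pos (show 0 < (μ+1)/2 by linarith)
    have h2 := Real.Gamma_pos_of_pos (show 0 < μ/2 by linarith)
    have h3 : 0 < Real.sqrt Real.pi := Real.sqrt_pos.mpr Real.pi_pos
    positivity
  set β : ℝ := (μ+1)/2 with hβdef
  have hβ : 1/2 < β := by rw [hβdef]; linarith
  have hβ0 : 0 < β := by linarith
  have hν' : ν = fun x => cμ * (1+x^2) ^ (-β) := by
    funext x
    rw [hν x, hβdef, neg_div]
  have hνc : Continuous ν := by rw [hν']; exact stmt7_nu_cont cμ β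
  have hνi : Integrable ν := by rw [hν']; exact stmt7_nu_int cμ β hc0 hβ
  have hνp : ∀ x, 0 < ν x := by
    intro x
    rw [hν x]
    positivity
  obtain ⟨hFeq, hFd, hFm⟩ := stmt7_F_props ν F hνc hνi hνp hF
  have hFpos : ∀ x, 0 < F x := by
    intro x
    have h1 : 0 ≤ F (x-1) := by
      rw [hF]
      exact setIntegral_nonneg measurableSet_Iic (fun t _ => (hνp t).le)
    have h2 : 0 < ∫ t in (x-1)..x, ν t :=
      intervalIntegral.intervalIntegral_pos_of_pos hνi.intervalIntegrable hνp (by linarith)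
    have := hFeq (x-1) x
    linarith
  -- total mass at least one
  have hFleT : ∀ x, F x ≤ ∫ t, ν t := by
    intro x
    rw [hF]
    exact setIntegral_le_integral hνi (Filter.Eventually.of_forall (fun t => (hνp t).le))
  have hT1 : 1 ≤ ∫ t, ν t := by
    by_contra hT
    push_neg at hT
    set T := ∫ t, ν t
    have hT0 : 0 < T := lt_of_lt_of_le (hFpos 0) (hFleT 0)
    set u : ℝ := (max T (1/2) + 1)/2 with hudef
    have hu1 : u < 1 := by
      have : max T (1/2) < 1 := max_lt hT (by norm_num)
      rw [hudef]; linarith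
    have hu0 : 0 < u := by
      have : (1/2:ℝ) ≤ max T (1/2) := le_max_right _ _
      rw [hudef]; linarith
    have huT : T < u := by
      have : T ≤ max T (1/2) := le_max_left _ _
      have h2 : max T (1/2) < u := by
        have : max T (1/2) < 1 := max_lt hT (by norm_num)
        rw [hudef]; linarith
      linarith
    have : u ≤ T := by
      rw [← hFinv u ⟨hu0, hu1⟩]
      exact hFleT _
    linarith
  -- inverse function: order transfers
  have hFinv_lt : ∀ u ∈ Ioo (0:ℝ) 1, ∀ y, u < F y → Finv u < y := by
    intro u hu y hy
    by_contra h
    push_neg at h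
    have := hFm.monotone h
    rw [hFinv u hu] at this
    linarith
  have hFinv_gt : ∀ u ∈ Ioo (0:ℝ) 1, ∀ y, F y < u → y < Finv u := by
    intro u hu y hy
    by_contra h
    push_neg at h
    have := hFm.monotone h
    rw [hFinv u hu] at this
    linarith
  -- continuity of the inverse
  have hFinv_cont : ∀ u ∈ Ioo (0:ℝ) 1, ContinuousAt Finv u := by
    intro u hu
    rw [Metric.continuousAt_iff]
    intro ε hε
    set x := Finv u with hxdef
    have hFx : F x = u := hFinv u hu
    have h1 : F (x - ε) < u := by rw [← hFx]; exact hFm (by linarith)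
    have h2 : u < F (x + ε) := by rw [← hFx]; exact hFm (by linarith)
    refine ⟨min (min (u - F (x-ε)) (F (x+ε) - u)) ((1-u)/2), by
      have := hu.2
      refine lt_min (lt_min (by linarith) (by linarith)) (by linarith), fun {v} hv => ?_⟩
    rw [Real.dist_eq] at hv
    rw [Real.dist_eq]
    have hvu := abs_lt.mp hv
    have hd1 : min (min (u - F (x-ε)) (F (x+ε) - u)) ((1-u)/2) ≤ u - F (x-ε) :=
      le_trans (min_le_left _ _) (min_le_left _ _)
    have hd2 : min (min (u - F (x-ε)) (F (x+ε) - u)) ((1-u)/2) ≤ F (x+ε) - u :=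
      le_trans (min_le_left _ _) (min_le_right _ _)
    have hd3 : min (min (u - F (x-ε)) (F (x+ε) - u)) ((1-u)/2) ≤ (1-u)/2 :=
      min_le_right _ _
    have hv1 : F (x - ε) < v := by linarith [hvu.1]
    have hv2 : v < F (x + ε) := by linarith [hvu.2]
    have hvmem : v ∈ Ioo (0:ℝ) 1 := ⟨lt_of_lt_of_le (hFpos (x-ε)) hv1.le, by linarith [hvu.2]⟩
    have hFv : F (Finv v) = v := hFinv v hvmem
    have ha : x - ε < Finv v := hFm.lt_iff_lt.mp (by rw [hFv]; exact hv1)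
    have hb : Finv v < x + ε := hFm.lt_iff_lt.mp (by rw [hFv]; exact hv2)
    rw [abs_lt]
    constructor <;> [linarith; linarith]
  -- derivative of the inverse
  have hFinv_d : ∀ u ∈ Ioo (0:ℝ) 1, HasDerivAt Finv ((ν (Finv u))⁻¹) u := by
    intro u hu
    apply HasDerivAt.of_local_left_inverse (hFinv_cont u hu) (hFd (Finv u)) (hνp _).ne'
    filter_upwards [isOpen_Ioo.mem_nhds hu] with v hv
    exact hFinv v hv
  -- the structural induction
  have claim : ∀ m : ℕ, 1 ≤ m → ∃ P : Polynomial ℝ, P.natDegree ≤ m - 1 ∧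
      ∀ u ∈ Ioo (0:ℝ) 1, iteratedDeriv m Finv u
        = P.eval (Finv u) * (1 + (Finv u)^2) ^ ((m:ℝ)*(μ+1)/2 - m + 1) := by
    intro m hm
    induction m, hm using Nat.le_induction with
    | base =>
      refine ⟨Polynomial.C cμ⁻¹, by simp, fun u hu => ?_⟩
      have hx2 : (0:ℝ) < 1 + (Finv u)^2 := by positivity
      rw [iteratedDeriv_one, (hFinv_d u hu).deriv, hν (Finv u), mul_inv,
        ← Real.rpow_neg hx2.le]
      simp only [Polynomial.eval_C, Nat.cast_one]
      congr 1
      ring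
    | succ m hm ih =>
      obtain ⟨P, hPd, hPe⟩ := ih
      set αm : ℝ := (m:ℝ)*(μ+1)/2 - m + 1 with hαm
      refine ⟨Polynomial.C cμ⁻¹ * (Polynomial.derivative P * (1 + Polynomial.X^2)
        + Polynomial.C (2*αm) * (Polynomial.X * P)), ?_, ?_⟩
      · -- degree bound
        apply le_trans (Polynomial.natDegree_C_mul_le _ _)
        apply le_trans (Polynomial.natDegree_add_le _ _)
        have hb2 : (Polynomial.C (2*αm) * (Polynomial.X * P)).natDegree ≤ m + 1 - 1 := by
          apply le_trans (Polynomial.natDegree_C_mul_le _ _)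
          apply le_trans (Polynomial.natDegree_mul_le)
          have := Polynomial.natDegree_X_le (R := ℝ)
          omega
        have hb1 : (Polynomial.derivative P * (1 + Polynomial.X^2)).natDegree ≤ m + 1 - 1 := by
          by_cases hP0 : P.natDegree = 0
          · obtain ⟨a, rfl⟩ := Polynomial.natDegree_eq_zero.mp hP0
            simp
          · apply le_trans (Polynomial.natDegree_mul_le)
            have h3 : (Polynomial.derivative P).natDegree ≤ P.natDegree - 1 :=
              Polynomial.natDegree_derivative_le P
            have h4 : (1 + Polynomial.X^2 : Polynomial ℝ).natDegree ≤ 2 := by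
              apply le_trans (Polynomial.natDegree_add_le _ _)
              simp [Polynomial.natDegree_X_pow]
            omega
        omega
      · intro u hu
        set x := Finv u with hxdef
        have hx2 : (0:ℝ) < 1 + x^2 := by positivity
        -- derivative of the representing function
        have h1 : HasDerivAt (fun y : ℝ => 1+y^2) (2*x) x := by
          simpa using ((hasDerivAt_pow 2 x).const_add 1)
        have h2 : HasDerivAt (fun z : ℝ => z ^ αm) (αm * (1+x^2)^(αm-1)) (1+x^2) :=
          Real.hasDerivAt_rpow_const (Or.inl hx2.ne')
        have h3 : HasDerivAt (fun y : ℝ => (1+y^2) ^ αm)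
            ((αm * (1+x^2)^(αm-1)) * (2*x)) x := by
          have := h2.comp x h1
          exact this
        have hgd : HasDerivAt (fun y : ℝ => P.eval y * (1+y^2) ^ αm)
            (P.derivative.eval x * (1+x^2)^αm
              + P.eval x * ((αm * (1+x^2)^(αm-1)) * (2*x))) x :=
          (Polynomial.hasDerivAt P x).mul h3
        have hcomp : HasDerivAt (fun v => P.eval (Finv v) * (1 + (Finv v)^2) ^ αm)
            ((P.derivative.eval x * (1+x^2)^αm
              + P.eval x * ((αm * (1+x^2)^(αm-1)) * (2*x))) * (ν x)⁻¹) u := by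
          have := hgd.comp u (hFinv_d u hu)
          exact this
        have heq : iteratedDeriv (m+1) Finv u
            = (P.derivative.eval x * (1+x^2)^αm
              + P.eval x * ((αm * (1+x^2)^(αm-1)) * (2*x))) * (ν x)⁻¹ := by
          rw [iteratedDeriv_succ]
          have hev : iteratedDeriv m Finv
              =ᶠ[nhds u] fun v => P.eval (Finv v) * (1 + (Finv v)^2) ^ αm :=
            eventually_of_mem (isOpen_Ioo.mem_nhds hu) (fun v hv => hPe v hv)
          rw [hev.deriv_eq, hcomp.deriv]
        rw [heq, hν x]
        -- algebra
        have hAβ : (cμ * (1+x^2) ^ (-(μ+1)/2))⁻¹ = cμ⁻¹ * (1+x^2)^β := by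
          rw [mul_inv, ← Real.rpow_neg hx2.le]
          congr 1
          rw [hβdef]
          ring_nf
        have e1 : (1+x^2)^αm = (1+x^2)^(αm-1) * (1+x^2) := by
          have h7 := Real.rpow_add hx2 (αm-1) 1
          rw [Real.rpow_one] at h7
          rw [← h7]
          congr 1
          ring
        have e2 : (1+x^2) ^ ((((m+1):ℕ):ℝ)*(μ+1)/2 - (((m+1):ℕ):ℝ) + 1)
            = (1+x^2)^(αm-1) * (1+x^2)^β := by
          rw [← Real.rpow_add hx2]
          congr 1
          rw [hαm, hβdef]
          push_cast
          ring
        rw [hAβ, e1, e2]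
        simp only [Polynomial.eval_mul, Polynomial.eval_add, Polynomial.eval_C,
          Polynomial.eval_X, Polynomial.eval_pow, Polynomial.eval_one]
        ring
  -- tail estimates
  have hrpow_sq : ∀ y : ℝ, 0 < y → ∀ z : ℝ, (y^2) ^ z = y ^ (2*z) := by
    intro y hy z
    rw [← Real.rpow_natCast y 2, ← Real.rpow_mul hy.le]
    norm_num
  have hTail0 : ∀ x : ℝ, x ≤ -1 → F x ≤ (cμ/μ * 2^(μ/2)) * (1+x^2)^(-(μ/2)) := by
    intro x hx
    have hxneg : 0 < -x := by linarith
    have hstep1 : F x ≤ cμ * ∫ t in Iic x, (-t) ^ (-2*β) := by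
      rw [hF, ← integral_const_mul]
      apply setIntegral_mono_on hνi.integrableOn _ measurableSet_Iic
      · intro t ht
        have htx : t ≤ x := ht
        have htneg : 0 < -t := by linarith
        rw [hν t]
        apply mul_le_mul_of_nonneg_left _ hc0.le
        have h5 : (-t) ^ (-2*β) = ((-t)^2) ^ (-β) := by
          rw [hrpow_sq (-t) htneg]
          congr 1
          ring
        rw [h5, show (-(μ+1)/2 : ℝ) = -β by rw [hβdef]; ring]
        apply Real.rpow_le_rpow_of_nonpos (by positivity) (by nlinarith) (by linarith)
      · apply Integrable.const_mul
        apply stmt7_refl_int (f := fun s : ℝ => s ^ (-2*β))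
        rw [integrableOn_Ici_iff_integrableOn_Ioi]
        exact integrableOn_Ioi_rpow_of_lt (by linarith) hxneg
    have hstep2 : (∫ t in Iic x, (-t) ^ (-2*β)) = (-x) ^ (-μ) / μ := by
      rw [integral_comp_neg_Iic x (fun s : ℝ => s ^ (-2*β)),
        integral_Ioi_rpow_of_lt (by linarith) hxneg]
      rw [show -2*β + 1 = -μ by rw [hβdef]; ring]
      rw [neg_div, div_neg, neg_neg]
    have hstep3 : (-x) ^ (-μ) ≤ 2^(μ/2) * (1+x^2)^(-(μ/2)) := by
      have h6 : (-x) ^ (-μ) = ((-x)^2) ^ (-(μ/2)) := by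
        rw [hrpow_sq (-x) hxneg]
        congr 1
        ring
      have h7 : ((-x):ℝ)^2 = x^2 := by ring
      rw [h6, h7]
      have h8 : (x^2 : ℝ) ^ (-(μ/2)) ≤ ((1+x^2)/2) ^ (-(μ/2)) := by
        apply Real.rpow_le_rpow_of_nonpos (by nlinarith) (by nlinarith) (by linarith)
      have h9 : ((1+x^2)/2 : ℝ) ^ (-(μ/2)) = 2^(μ/2) * (1+x^2)^(-(μ/2)) := by
        rw [Real.div_rpow (by positivity) (by norm_num), Real.rpow_neg (by positivity),
          Real.rpow_neg (by norm_num)]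
        rw [div_eq_mul_inv, inv_inv, mul_comm]
      rw [h9] at h8
      exact h8
    calc F x ≤ cμ * ((-x) ^ (-μ) / μ) := by rw [← hstep2]; exact hstep1
      _ ≤ cμ * ((2^(μ/2) * (1+x^2)^(-(μ/2))) / μ) := by
          gcongr
      _ = (cμ/μ * 2^(μ/2)) * (1+x^2)^(-(μ/2)) := by ring
  have hTail1 : ∀ x : ℝ, 1 ≤ x → 1 - F x ≤ (cμ/μ * 2^(μ/2)) * (1+x^2)^(-(μ/2)) := by
    intro x hx
    have hxpos : 0 < x := by linarith
    have hsum : F x + (∫ t in Ioi x, ν t) = ∫ t, ν t := by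
      rw [hF]
      exact intervalIntegral.integral_Iic_add_Ioi hνi.integrableOn hνi.integrableOn
    have hstep1 : (∫ t in Ioi x, ν t) ≤ cμ * ∫ t in Ioi x, t ^ (-2*β) := by
      rw [← integral_const_mul]
      apply setIntegral_mono_on hνi.integrableOn _ measurableSet_Ioi
      · intro t ht
        have htx : x < t := ht
        have htpos : 0 < t := by linarith
        rw [hν t]
        apply mul_le_mul_of_nonneg_left _ hc0.le
        have h5 : t ^ (-2*β) = (t^2) ^ (-β) := by
          rw [hrpow_sq t htpos]
          congr 1
          ring
        rw [h5, show (-(μ+1)/2 : ℝ) = -β by rw [hβdef]; ring]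
        apply Real.rpow_le_rpow_of_nonpos (by positivity) (by nlinarith) (by linarith)
      · exact (integrableOn_Ioi_rpow_of_lt (by linarith) hxpos).const_mul cμ
    have hstep2 : (∫ t in Ioi x, t ^ (-2*β)) = x ^ (-μ) / μ := by
      rw [integral_Ioi_rpow_of_lt (by linarith) hxpos]
      rw [show -2*β + 1 = -μ by rw [hβdef]; ring]
      rw [neg_div, div_neg, neg_neg]
    have hstep3 : x ^ (-μ) ≤ 2^(μ/2) * (1+x^2)^(-(μ/2)) := by
      have h6 : x ^ (-μ) = (x^2) ^ (-(μ/2)) := by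
        rw [hrpow_sq x hxpos]
        congr 1
        ring
      rw [h6]
      have h8 : (x^2 : ℝ) ^ (-(μ/2)) ≤ ((1+x^2)/2) ^ (-(μ/2)) := by
        apply Real.rpow_le_rpow_of_nonpos (by nlinarith) (by nlinarith) (by linarith)
      have h9 : ((1+x^2)/2 : ℝ) ^ (-(μ/2)) = 2^(μ/2) * (1+x^2)^(-(μ/2)) := by
        rw [Real.div_rpow (by positivity) (by norm_num), Real.rpow_neg (by positivity),
          Real.rpow_neg (by norm_num)]
        rw [div_eq_mul_inv, inv_inv, mul_comm]
      rw [h9] at h8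
      exact h8
    calc 1 - F x ≤ (∫ t, ν t) - F x := by linarith
      _ = ∫ t in Ioi x, ν t := by linarith
      _ ≤ cμ * (x ^ (-μ) / μ) := by rw [← hstep2]; exact hstep1
      _ ≤ cμ * ((2^(μ/2) * (1+x^2)^(-(μ/2))) / μ) := by
          gcongr
      _ = (cμ/μ * 2^(μ/2)) * (1+x^2)^(-(μ/2)) := by ring
  -- main bound
  obtain ⟨P, hPdeg, hPeq⟩ := claim n hn
  obtain ⟨Cp, hCp0, hCpb⟩ := stmt7_poly_bound P (n-1) hPdeg
  set q : ℝ := μ * n + 1 with hq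
  have hq0 : 0 < q := by positivity
  have B1 : ∀ u ∈ Ioo (0:ℝ) 1, |iteratedDeriv n Finv u| ≤ Cp * (1 + (Finv u)^2) ^ (q/2) := by
    intro u hu
    set x := Finv u with hxdef
    have hA : (0:ℝ) < 1 + x^2 := by positivity
    rw [hPeq u hu, abs_mul, abs_of_pos (Real.rpow_pos_of_pos hA _)]
    calc |P.eval x| * (1+x^2)^((n:ℝ)*(μ+1)/2 - n + 1)
        ≤ (Cp * (1+x^2)^((((n-1):ℕ):ℝ)/2)) * (1+x^2)^((n:ℝ)*(μ+1)/2 - n + 1) :=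
          mul_le_mul_of_nonneg_right (hCpb x) (Real.rpow_nonneg hA.le _)
      _ = Cp * (1+x^2)^(q/2) := by
          rw [mul_assoc, ← Real.rpow_add hA]
          congr 1
          have hcast : ((n-1 : ℕ):ℝ) = (n:ℝ) - 1 := by
            rw [Nat.cast_sub hn]; norm_num
          rw [hcast, hq]
          ring
  set c2 : ℝ := cμ/μ * 2^(μ/2) with hc2
  have hc20 : 0 < c2 := by
    rw [hc2]
    have := Real.rpow_pos_of_pos (show (0:ℝ) < 2 by norm_num) (μ/2)
    positivity
  set K : ℝ := (1 + max ((Finv (1/2:ℝ))^2) 1) ^ (q/2) with hK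
  have hK0 : 0 < K := by
    rw [hK]
    apply Real.rpow_pos_of_pos
    have : (0:ℝ) ≤ max ((Finv (1/2:ℝ))^2) 1 := le_trans zero_le_one (le_max_right _ _)
    linarith
  have hcq0 : 0 < c2 ^ (q/μ) := Real.rpow_pos_of_pos hc20 _
  refine ⟨Cp * c2^(q/μ) + Cp * K + 1, by positivity, ?_, ?_⟩
  · -- near 0
    set δ0 : ℝ := min (F (-1)) (1/2) with hδ0def
    have hδ0 : 0 < δ0 := lt_min (hFpos _) (by norm_num)
    filter_upwards [Ioo_mem_nhdsGT_of_mem (show (0:ℝ) ∈ Ico 0 δ0 from ⟨le_refl _, hδ0⟩)]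
      with u hu
    have hu1 : u ∈ Ioo (0:ℝ) 1 := by
      refine ⟨hu.1, lt_of_lt_of_le hu.2 ?_⟩
      exact le_trans (min_le_right _ _) (by norm_num)
    set x := Finv u with hxdef
    have hx : x < -1 :=
      hFinv_lt u hu1 (-1) (lt_of_lt_of_le hu.2 (min_le_left _ _))
    have hA : (0:ℝ) < 1 + x^2 := by positivity
    have htail : u ≤ c2 * (1+x^2)^(-(μ/2)) := by
      have := hTail0 x hx.le
      rw [hFinv u hu1] at this
      exact this
    have hAμ : (1+x^2)^(μ/2) ≤ c2 / u := by
      rw [le_div_iff₀ hu.1]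
      have h1 : (1+x^2)^(-(μ/2)) = ((1+x^2)^(μ/2))⁻¹ := by
        rw [Real.rpow_neg hA.le]
      rw [h1] at htail
      have h2 : 0 < (1+x^2)^(μ/2) := Real.rpow_pos_of_pos hA _
      calc (1+x^2)^(μ/2) * u ≤ (1+x^2)^(μ/2) * (c2 * ((1+x^2)^(μ/2))⁻¹) :=
            mul_le_mul_of_nonneg_left htail h2.le
        _ = c2 := by field_simp
    have hkey : (1+x^2)^(q/2) ≤ (c2/u)^(q/μ) := by
      have h1 : (1+x^2)^(q/2) = ((1+x^2)^(μ/2))^(q/μ) := by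
        rw [← Real.rpow_mul hA.le]
        congr 1
        field_simp
      rw [h1]
      exact Real.rpow_le_rpow (Real.rpow_nonneg hA.le _) hAμ (by positivity)
    have hsplit : (c2/u)^(q/μ) = c2^(q/μ) * u^(-(q/μ)) := by
      rw [Real.div_rpow hc20.le hu.1.le, Real.rpow_neg hu.1.le, div_eq_mul_inv]
    have hexp : -(q/μ) = -(μ * n + 1)/μ := by rw [hq]; ring
    have hupos : 0 ≤ u^(-(q/μ)) := Real.rpow_nonneg hu.1.le _
    calc |iteratedDeriv n Finv u| ≤ Cp * (1+x^2)^(q/2) := B1 u hu1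
      _ ≤ Cp * (c2^(q/μ) * u^(-(q/μ))) :=
          mul_le_mul_of_nonneg_left (hsplit ▸ hkey) hCp0.le
      _ = (Cp * c2^(q/μ)) * u^(-(q/μ)) := by ring
      _ ≤ (Cp * c2^(q/μ) + Cp * K + 1) * u^(-(q/μ)) := by
          apply mul_le_mul_of_nonneg_right _ hupos
          nlinarith [hCp0, hK0]
      _ = (Cp * c2^(q/μ) + Cp * K + 1) * u ^ (-(μ * n + 1)/μ) := by rw [hexp]
  · -- near 1
    by_cases hF1 : F 1 < 1
    · set a : ℝ := max (F 1) (1/2) with hadef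
      have ha1 : a < 1 := max_lt hF1 (by norm_num)
      filter_upwards [Ioo_mem_nhdsLT_of_mem (show (1:ℝ) ∈ Ioc a 1 from ⟨ha1, le_refl _⟩)]
        with u hu
      have hu1 : u ∈ Ioo (0:ℝ) 1 := by
        refine ⟨lt_of_lt_of_le ?_ (le_of_lt hu.1), hu.2⟩
        · exact lt_of_lt_of_le (by norm_num) (le_max_right (F 1) (1/2)) |>.trans_le (le_refl a)
      set x := Finv u with hxdef
      have hx : 1 < x := by
        apply hFinv_gt u hu1 1
        exact lt_of_le_of_lt (le_max_left _ _) hu.1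
      have hA : (0:ℝ) < 1 + x^2 := by positivity
      have h1u : 0 < 1 - u := by linarith [hu.2]
      have htail : 1 - u ≤ c2 * (1+x^2)^(-(μ/2)) := by
        have := hTail1 x hx.le
        rw [hFinv u hu1] at this
        exact this
      have hAμ : (1+x^2)^(μ/2) ≤ c2 / (1-u) := by
        rw [le_div_iff₀ h1u]
        have h1 : (1+x^2)^(-(μ/2)) = ((1+x^2)^(μ/2))⁻¹ := by
          rw [Real.rpow_neg hA.le]
        rw [h1] at htail
        have h2 : 0 < (1+x^2)^(μ/2) := Real.rpow_pos_of_pos hA _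
        calc (1+x^2)^(μ/2) * (1-u) ≤ (1+x^2)^(μ/2) * (c2 * ((1+x^2)^(μ/2))⁻¹) :=
              mul_le_mul_of_nonneg_left htail h2.le
          _ = c2 := by field_simp
      have hkey : (1+x^2)^(q/2) ≤ (c2/(1-u))^(q/μ) := by
        have h1 : (1+x^2)^(q/2) = ((1+x^2)^(μ/2))^(q/μ) := by
          rw [← Real.rpow_mul hA.le]
          congr 1
          field_simp
        rw [h1]
        exact Real.rpow_le_rpow (Real.rpow_nonneg hA.le _) hAμ (by positivity)
      have hsplit : (c2/(1-u))^(q/μ) = c2^(q/μ) * (1-u)^(-(q/μ)) := by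
        rw [Real.div_rpow hc20.le h1u.le, Real.rpow_neg h1u.le, div_eq_mul_inv]
      have hexp : -(q/μ) = -(μ * n + 1)/μ := by rw [hq]; ring
      have hupos : 0 ≤ (1-u)^(-(q/μ)) := Real.rpow_nonneg h1u.le _
      calc |iteratedDeriv n Finv u| ≤ Cp * (1+x^2)^(q/2) := B1 u hu1
        _ ≤ Cp * (c2^(q/μ) * (1-u)^(-(q/μ))) :=
            mul_le_mul_of_nonneg_left (hsplit ▸ hkey) hCp0.le
        _ = (Cp * c2^(q/μ)) * (1-u)^(-(q/μ)) := by ring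
        _ ≤ (Cp * c2^(q/μ) + Cp * K + 1) * (1-u)^(-(q/μ)) := by
            apply mul_le_mul_of_nonneg_right _ hupos
            nlinarith [hCp0, hK0]
        _ = (Cp * c2^(q/μ) + Cp * K + 1) * (1-u) ^ (-(μ * n + 1)/μ) := by rw [hexp]
    · push_neg at hF1
      filter_upwards [Ioo_mem_nhdsLT_of_mem
        (show (1:ℝ) ∈ Ioc (1/2:ℝ) 1 from ⟨by norm_num, le_refl _⟩)] with u hu
      have hu1 : u ∈ Ioo (0:ℝ) 1 := ⟨lt_trans (by norm_num) hu.1, hu.2⟩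
      set x := Finv u with hxdef
      have hxlt : x < 1 := hFinv_lt u hu1 1 (lt_of_lt_of_le hu.2 hF1)
      have hhalf : (1/2:ℝ) ∈ Ioo (0:ℝ) 1 := by norm_num
      set x0 : ℝ := Finv (1/2) with hx0def
      have hxgt : x0 < x := by
        apply hFinv_gt u hu1 x0
        rw [hFinv (1/2) hhalf]
        exact hu.1
      have hxsq : x^2 ≤ max (x0^2) 1 := by
        rcases le_or_gt 0 x with hx0 | hx0
        · exact le_trans (by nlinarith) (le_max_right _ _)
        · exact le_trans (by nlinarith) (le_max_left _ _)
      have hA : (0:ℝ) < 1 + x^2 := by positivity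
      have hbound : (1+x^2)^(q/2) ≤ K := by
        rw [hK]
        apply Real.rpow_le_rpow hA.le (by linarith) (by positivity)
      have h1u : 0 < 1 - u := by linarith [hu.2]
      have h1u2 : 1 - u ≤ 1 := by linarith [hu1.1]
      have hge1 : 1 ≤ (1-u) ^ (-(μ * n + 1)/μ) := by
        have := Real.rpow_le_rpow_of_exponent_ge h1u h1u2
          (show -(μ * n + 1)/μ ≤ 0 by
            apply div_nonpos_of_nonpos_of_nonneg _ hμ.le
            have : (0:ℝ) ≤ μ * n + 1 := by positivity
            linarith)
        rw [Real.rpow_zero] at this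
        exact this
      calc |iteratedDeriv n Finv u| ≤ Cp * (1+x^2)^(q/2) := B1 u hu1
        _ ≤ Cp * K := mul_le_mul_of_nonneg_left hbound hCp0.le
        _ ≤ (Cp * c2^(q/μ) + Cp * K + 1) * 1 := by nlinarith [hcq0, hCp0]
        _ ≤ (Cp * c2^(q/μ) + Cp * K + 1) * (1-u) ^ (-(μ * n + 1)/μ) := by
            apply mul_le_mul_of_nonneg_left hge1
            nlinarith [hcq0, hCp0, hK0]
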